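/- Fix a constant c ≥ 0. The function g(γ) = (ln(1+γ) − c) / √(1 − (1+γ)^{−2}) is concave on [1, ∞). Equivalently, writing u = 1+γ ≥ 2, the second derivative of u·(ln u − c)/√(u²−1) with respect to u has the sign of 3u·(ln u − c) − (u²−1)(u + 1/u), which is nonpositive for all u ≥ 2 when c ≥ 0. -/

import Mathlib

open Real Set

lemma fbl_key (c : ℝ) (hc : 0 ≤ c) (u : ℝ) (hu : 2 ≤ u) :
    3 * u * (Real.log u - c) - (u ^ 2 - 1) * (u + 1 / u) ≤ 0 := by
  have hu0 : (0:ℝ) < u := by linarith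
  have hl : Real.log u ≤ u - 1 := Real.log_le_sub_one_of_pos hu0
  have hinv : u * (1 / u) = 1 := by field_simp
  nlinarith [mul_pos hu0 hu0, sq_nonneg (u - 2), mul_nonneg hu0.le hc,
    mul_nonneg (mul_nonneg hu0.le hu0.le) (by linarith : (0:ℝ) ≤ u - 2)]

lemma fbl_hasDerivF (c u : ℝ) (hu : 1 < u) :
    HasDerivAt (fun v : ℝ => (Real.log v - c) / Real.sqrt (1 - (v ^ 2)⁻¹))
      ((u ^ 2 - 1 - (Real.log u - c)) / (Real.sqrt (u ^ 2 - 1)) ^ 3) u := by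
  have hu0 : (0:ℝ) < u := by linarith
  have hs2 : (0:ℝ) < u ^ 2 - 1 := by nlinarith
  set s := Real.sqrt (u ^ 2 - 1) with hs
  have hspos : 0 < s := Real.sqrt_pos.mpr hs2
  have hssq : s ^ 2 = u ^ 2 - 1 := Real.sq_sqrt hs2.le
  have hsd : Real.sqrt (1 - (u ^ 2)⁻¹) = s / u := by
    rw [hs, ← Real.sqrt_sq hu0.le, ← Real.sqrt_div' _ (by positivity)]
    congr 1
    field_simp
    rw [Real.sq_sqrt (sq_nonneg u)]
  have hnum : HasDerivAt (fun v : ℝ => Real.log v - c) (1 / u) u :=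
    ((Real.hasDerivAt_log hu0.ne').sub_const c).congr_deriv (one_div u).symm
  have hinner : HasDerivAt (fun v : ℝ => 1 - (v ^ 2)⁻¹) (2 * u / u ^ 4) u := by
    have h2 : HasDerivAt (fun v : ℝ => v ^ 2) (2 * u) u := by
      simpa using hasDerivAt_pow 2 u
    have h3 := (h2.inv (by positivity : u ^ 2 ≠ 0)).const_sub 1
    refine h3.congr_deriv ?_
    field_simp
  have hDpos : (0:ℝ) < 1 - (u ^ 2)⁻¹ := by
    rw [sub_pos, inv_lt_one_iff₀]; right; nlinarith
  have hden : HasDerivAt (fun v : ℝ => Real.sqrt (1 - (v ^ 2)⁻¹))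
      (2 * u / u ^ 4 / (2 * Real.sqrt (1 - (u ^ 2)⁻¹))) u :=
    hinner.sqrt hDpos.ne'
  have hdenne : Real.sqrt (1 - (u ^ 2)⁻¹) ≠ 0 := by rw [hsd]; positivity
  have H := hnum.div hden hdenne
  refine H.congr_deriv ?_
  rw [hsd]
  have e1 : (s / u) ^ 2 = (u ^ 2 - 1) / u ^ 2 := by rw [div_pow, hssq]
  rw [e1]
  have h3 : s ^ 3 = s * (u ^ 2 - 1) := by rw [pow_succ, hssq]; ring
  rw [h3]
  field_simp
  ring_nf
  linear_combination hssq

lemma fbl_hasDerivG (c u : ℝ) (hu : 1 < u) :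
    HasDerivAt (fun v : ℝ => (v ^ 2 - 1 - (Real.log v - c)) / (Real.sqrt (v ^ 2 - 1)) ^ 3)
      ((3 * u * (Real.log u - c) - (u ^ 2 - 1) * (u + 1 / u)) / (Real.sqrt (u ^ 2 - 1)) ^ 5) u := by
  have hu0 : (0:ℝ) < u := by linarith
  have hs2 : (0:ℝ) < u ^ 2 - 1 := by nlinarith
  set s := Real.sqrt (u ^ 2 - 1) with hs
  have hspos : 0 < s := Real.sqrt_pos.mpr hs2
  have hssq : s ^ 2 = u ^ 2 - 1 := Real.sq_sqrt hs2.le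
  have hnum : HasDerivAt (fun v : ℝ => v ^ 2 - 1 - (Real.log v - c)) (2 * u - 1 / u) u := by
    have h1 : HasDerivAt (fun v : ℝ => v ^ 2 - 1) (2 * u) u := by
      simpa using (hasDerivAt_pow 2 u).sub_const 1
    have h2 : HasDerivAt (fun v : ℝ => Real.log v - c) (1 / u) u := by
      simpa [one_div] using (Real.hasDerivAt_log hu0.ne').sub_const c
    exact h1.sub h2
  have hsq : HasDerivAt (fun v : ℝ => Real.sqrt (v ^ 2 - 1)) (2 * u / (2 * s)) u := by
    have h1 : HasDerivAt (fun v : ℝ => v ^ 2 - 1) (2 * u) u := by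
      simpa using (hasDerivAt_pow 2 u).sub_const 1
    exact h1.sqrt hs2.ne'
  have hden : HasDerivAt (fun v : ℝ => (Real.sqrt (v ^ 2 - 1)) ^ 3)
      (3 * s ^ 2 * (2 * u / (2 * s))) u := by
    exact (hsq.pow 3).congr_deriv (by norm_num [hs])
  have hdenne : s ^ 3 ≠ 0 := by positivity
  have H := hnum.div hden (by simpa [hs] using hdenne)
  refine H.congr_deriv ?_
  have h3 : s ^ 3 = s * (u ^ 2 - 1) := by rw [pow_succ, hssq]; ring
  have h5 : s ^ 5 = s * (u ^ 2 - 1) ^ 2 := by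
    have : s ^ 5 = (s ^ 2) ^ 2 * s := by ring
    rw [this, hssq]; ring
  rw [h3, h5]
  field_simp
  ring_nf

/-- For a fixed constant `c ≥ 0`, the function
`g(γ) = (ln(1+γ) − c)/√(1 − (1+γ)^{−2})` is concave on `[1, ∞)`;
moreover (with `u = 1+γ ≥ 2`) the quantity `3u·(ln u − c) − (u²−1)(u + 1/u)`,
which gives the sign of the second derivative of `u·(ln u − c)/√(u²−1)`,
is nonpositive for all `u ≥ 2`. -/
theorem fbl_omega_concave (c : ℝ) (hc : 0 ≤ c) :
    ConcaveOn ℝ (Set.Ici 1)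
      (fun γ : ℝ => (Real.log (1 + γ) - c) / Real.sqrt (1 - ((1 + γ) ^ 2)⁻¹)) ∧
    ∀ u : ℝ, 2 ≤ u →
      3 * u * (Real.log u - c) - (u ^ 2 - 1) * (u + 1 / u) ≤ 0 := by
  refine ⟨?_, fun u hu => fbl_key c hc u hu⟩
  have haff : ∀ γ : ℝ, HasDerivAt (fun γ : ℝ => 1 + γ) 1 γ :=
    fun γ => (hasDerivAt_id γ).const_add 1
  have hF : ∀ γ : ℝ, 0 < γ →
      HasDerivAt (fun γ : ℝ => (Real.log (1 + γ) - c) / Real.sqrt (1 - ((1 + γ) ^ 2)⁻¹))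
        (((1 + γ) ^ 2 - 1 - (Real.log (1 + γ) - c)) / (Real.sqrt ((1 + γ) ^ 2 - 1)) ^ 3) γ := by
    intro γ hγ
    have := (fbl_hasDerivF c (1 + γ) (by linarith)).comp γ (haff γ)
    simpa [Function.comp_def] using this
  have hG : ∀ γ : ℝ, 0 < γ →
      HasDerivAt (fun γ : ℝ => ((1 + γ) ^ 2 - 1 - (Real.log (1 + γ) - c)) /
          (Real.sqrt ((1 + γ) ^ 2 - 1)) ^ 3)
        ((3 * (1 + γ) * (Real.log (1 + γ) - c) - ((1 + γ) ^ 2 - 1) * ((1 + γ) + 1 / (1 + γ))) /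
          (Real.sqrt ((1 + γ) ^ 2 - 1)) ^ 5) γ := by
    intro γ hγ
    have := (fbl_hasDerivG c (1 + γ) (by linarith)).comp γ (haff γ)
    simpa [Function.comp_def] using this
  have hint : interior (Set.Ici (1:ℝ)) = Set.Ioi 1 := interior_Ici
  refine concaveOn_of_hasDerivWithinAt2_nonpos
    (f' := fun γ : ℝ => ((1 + γ) ^ 2 - 1 - (Real.log (1 + γ) - c)) /
      (Real.sqrt ((1 + γ) ^ 2 - 1)) ^ 3)
    (f'' := fun γ : ℝ => (3 * (1 + γ) * (Real.log (1 + γ) - c) -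
      ((1 + γ) ^ 2 - 1) * ((1 + γ) + 1 / (1 + γ))) / (Real.sqrt ((1 + γ) ^ 2 - 1)) ^ 5)
    (convex_Ici 1) ?_ ?_ ?_ ?_
  · intro γ hγ
    have : (1:ℝ) ≤ γ := hγ
    exact (hF γ (by linarith)).continuousAt.continuousWithinAt
  · intro γ hγ
    rw [hint] at hγ
    exact (hF γ (by exact lt_trans one_pos hγ)).hasDerivWithinAt
  · intro γ hγ
    rw [hint] at hγ
    exact (hG γ (by exact lt_trans one_pos hγ)).hasDerivWithinAt
  · intro γ hγ
    rw [hint] at hγ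
    have hγ1 : (1:ℝ) < γ := hγ
    have hkey := fbl_key c hc (1 + γ) (by linarith)
    have hs2 : (0:ℝ) < (1 + γ) ^ 2 - 1 := by nlinarith
    have : (0:ℝ) ≤ (Real.sqrt ((1 + γ) ^ 2 - 1)) ^ 5 := by positivity
    exact div_nonpos_of_nonpos_of_nonneg hkey this
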